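/- arXiv:2509.00506 — 3 statements merged into one kernel-verified Lean document; each statement's English description precedes it below -/
import Mathlib

section
/- If T: V → [k] ∪ {k+1} satisfies the discrete average property, then its complement T': V → [k] ∪ {k+1}, defined by T'(v) = (k+1) ⊖ T(v), also satisfies the discrete average property (with the roles of the maximizing and minimizing neighbors exchanged). -/
/-- `ℕ*`: natural numbers with an optional advantage marker `*`.
`(n, false)` is the plain number `n`; `(n, true)` is `n*`. -/
abbrev NStar := ℕ × Bool

/-- The advantage-aware addition `⊕` on `ℕ*`. -/
def oplus : NStar → NStar → NStar
  | (x, false), (y, false) => (x + y, false)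
  | (x, true),  (y, false) => (x + y, true)
  | (x, false), (y, true)  => (x + y, true)
  | (x, true),  (y, true)  => (x + y + 1, false)

/-- The advantage-aware (truncated) subtraction `⊖` on `ℕ*`. -/
def ominus : NStar → NStar → NStar
  | (x, false), (y, false) => (x - y, false)
  | (x, true),  (y, false) => (x - y, true)
  | (x, false), (y, true)  => (x - y - 1, true)
  | (x, true),  (y, true)  => (x - y, false)

/-- Encoding of `ℕ*` into `ℕ`: `n ↦ 2n`, `n* ↦ 2n+1`. -/
def encodeN : NStar → ℕ := fun p => 2 * p.1 + (if p.2 then 1 else 0)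

/-- The order `≺` on `ℕ*`: `0 ≺ 0* ≺ 1 ≺ 1* ≺ ⋯`. -/
def nlt (x y : NStar) : Prop := encodeN x < encodeN y

/-- The order `⪯` on `ℕ*`. -/
def nle (x y : NStar) : Prop := encodeN x ≤ encodeN y

/-- Successor with respect to the order `≺` on `ℕ*`. -/
def nsucc : NStar → NStar
  | (n, false) => (n, true)
  | (n, true)  => (n + 1, false)

/-- Predecessor with respect to the order `≺` on `ℕ*` (`pred 0 = 0`). -/
def npred : NStar → NStar
  | (n, true)      => (n, false)
  | (0, false)     => (0, false)
  | (n + 1, false) => (n, true)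


/-- The discrete average value `⌊(s)/2⌋ + ε` from the average property, where
`s = |T(v⁺)| + |T(v⁻)|` and the second argument is `T(v⁻)` (whose advantage
status determines `ε`): `ε = 0` if `s` is even and `T(v⁻) ∈ ℕ`; `ε = 1` if `s`
is odd and `T(v⁻) ∈ ℕ* \\ ℕ`; `ε = *` otherwise. -/
def avgEps (s : ℕ) (tminus : NStar) : NStar :=
  if s % 2 = 0 ∧ tminus.2 = false then (s / 2, false)
  else if s % 2 = 1 ∧ tminus.2 = true then (s / 2 + 1, false)
  else (s / 2, true)

/-- The bid `b^T(v)`: `T(v) ⊖ T(v⁻)` if `T(v⁻) ∈ ℕ`, and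
`T(v) ⊖ (|T(v⁻)| + 1)` otherwise, where `vm` chooses the minimizing neighbor. -/
def bidT {V : Type*} (T : V → NStar) (vm : V → V) (v : V) : NStar :=
  if (T (vm v)).2 = false then ominus (T v) (T (vm v))
  else ominus (T v) ((T (vm v)).1 + 1, false)


lemma encodeN_inj : ∀ x y : NStar, encodeN x = encodeN y → x = y := by
  rintro ⟨n, bx⟩ ⟨m, bb⟩ h
  rcases bx <;> rcases bb <;> simp [encodeN] at h <;> simp <;> omega

set_option maxHeartbeats 1000000 in
lemma key_avg (k : ℕ) (x y : NStar) (hx : encodeN x ≤ 2 * (k + 1))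
    (hy : encodeN y ≤ 2 * (k + 1)) (hxy : encodeN y ≤ encodeN x) :
    ominus ((k + 1 : ℕ), false) (avgEps (x.1 + y.1) y) =
      avgEps ((ominus ((k + 1 : ℕ), false) y).1 +
        (ominus ((k + 1 : ℕ), false) x).1) (ominus ((k + 1 : ℕ), false) x) := by
  obtain ⟨a, p⟩ := x
  obtain ⟨b, q⟩ := y
  apply encodeN_inj
  rcases p <;> rcases q <;>
    simp [avgEps, ominus, encodeN] at hx hy hxy ⊢ <;>
    split_ifs <;> simp [ominus, encodeN] <;> omega

/-- if `T : V → [k] ∪ {k+1}` satisfies the discrete average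
property, its complement `T'(v) = (k+1) ⊖ T(v)` also satisfies the discrete
average property, with the roles of the maximizing and minimizing neighbors
exchanged. -/
theorem complement_average {V : Type*} [Fintype V] (E : V → V → Prop) (k : ℕ)
    (hout : ∀ v : V, ∃ u, E v u)
    (T : V → NStar) (hrange : ∀ v, nle (T v) ((k + 1 : ℕ), false))
    (vp vm : V → V)
    (hvpE : ∀ v, E v (vp v)) (hvmE : ∀ v, E v (vm v))
    (hvp : ∀ v, ∀ u, E v u → nle (T u) (T (vp v)))
    (hvm : ∀ v, ∀ u, E v u → nle (T (vm v)) (T u))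
    (havg : ∀ v, T v = avgEps ((T (vp v)).1 + (T (vm v)).1) (T (vm v))) :
    ∀ v : V,
      (∀ u, E v u →
        nle (ominus ((k + 1 : ℕ), false) (T u))
            (ominus ((k + 1 : ℕ), false) (T (vm v)))) ∧
      (∀ u, E v u →
        nle (ominus ((k + 1 : ℕ), false) (T (vp v)))
            (ominus ((k + 1 : ℕ), false) (T u))) ∧
      ominus ((k + 1 : ℕ), false) (T v) =
        avgEps ((ominus ((k + 1 : ℕ), false) (T (vm v))).1 +
                (ominus ((k + 1 : ℕ), false) (T (vp v))).1)
          (ominus ((k + 1 : ℕ), false) (T (vp v))) := by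
  have hinj : ∀ x y : NStar, encodeN x = encodeN y → x = y := by
    rintro ⟨n, bx⟩ ⟨m, bb⟩ h
    rcases bx <;> rcases bb <;> simp [encodeN] at h <;> simp <;> omega
  have hr : ∀ u, encodeN (T u) ≤ 2 * (k + 1) := by
    intro u
    have := hrange u
    simpa [nle, encodeN] using this
  have hcomp : ∀ x : NStar, encodeN x ≤ 2 * (k + 1) →
      encodeN (ominus ((k + 1 : ℕ), false) x) = 2 * (k + 1) - encodeN x := by
    rintro ⟨n, b⟩ h
    rcases b <;> simp [ominus, encodeN] at * <;> omega
  intro v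
  refine ⟨?_, ?_, ?_⟩
  · intro u hu
    have h1 := hvm v u hu
    unfold nle at *
    rw [hcomp _ (hr u), hcomp _ (hr (vm v))]
    omega
  · intro u hu
    have h1 := hvp v u hu
    unfold nle at *
    rw [hcomp _ (hr u), hcomp _ (hr (vp v))]
    omega
  · rw [havg v]
    exact key_avg k (T (vp v)) (T (vm v)) (hr _) (hr _) (hvm v (vp v) (hvpE v))
end

section
/- The energy thresholds μ_n of truncated energy bidding games are antitone in the budget: for every n ≥ 0, every vertex v, and budgets B₁ ⪰ B₂ in [k], one has μ_n(v, B₁) ≤ μ_n(v, B₂). -/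
/-- An energy discrete-bidding game: a finite graph with nonempty neighbor
sets, total budget `k`, and integer edge weights. Budgets are encoded as
natural numbers via `n ↦ 2n`, `n* ↦ 2n+1`, so the budget set `[k]` is
`{0, 1, ..., 2k+1}`, `⊕` is `+`, `⊖` is truncated subtraction, and `succ`
is `+1`. -/
structure EGame (V : Type*) where
  /-- neighbors -/
  N : V → Finset V
  /-- every vertex has an outgoing edge -/
  hN : ∀ v, (N v).Nonempty
  /-- total budget -/
  k : ℕ
  /-- edge weights -/
  w : V → V → ℤ

/-- The minimal bid (in the encoding) by which Consumer trumps Preserver's bid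
`b` when Preserver's budget is `B`: `b` itself if Preserver holds but does not
use the advantage, and `succ b` otherwise. -/
def trumpE (B b : ℕ) : ℕ := if B % 2 = 1 ∧ b % 2 = 0 then b else b + 1

variable {V : Type*}

/-- The energy Preserver needs upon winning the bidding with `b`. -/
def Ewin (G : EGame V) (m : V → ℕ → ℕ) (v : V) (B b : ℕ) : ℕ :=
  (G.N v).inf' (G.hN v) fun v' => ((m v' (B - b) : ℤ) - G.w v v').toNat

/-- The energy Preserver needs upon losing the bidding with `b`. -/
def Elose (G : EGame V) (m : V → ℕ → ℕ) (v : V) (B b : ℕ) : ℕ :=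
  (G.N v).sup' (G.hN v) fun v' => ((m v' (B + trumpE B b) : ℤ) - G.w v v').toNat

/-- The energy Preserver needs when bidding `b`. -/
def Enext (G : EGame V) (m : V → ℕ → ℕ) (v : V) (B b : ℕ) : ℕ :=
  if B + trumpE B b ≤ 2 * G.k + 1 then max (Ewin G m v B b) (Elose G m v B b)
  else Ewin G m v B b

/-- The energy threshold `μ_n(v, B)` of the `n`-turn truncated game. -/
def muN (G : EGame V) : ℕ → V → ℕ → ℕ
  | 0 => fun _ _ => 0
  | n + 1 => fun v B =>
      (Finset.range (B + 1)).inf' ⟨0, by simp⟩ fun b => Enext G (muN G n) v B b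


/-- the truncated energy thresholds are antitone in the budget:
for budgets `B₁ ⪰ B₂` in `[k]`, `μ_n(v, B₁) ≤ μ_n(v, B₂)`. -/
theorem muN_antitone_budget {V : Type*} (G : EGame V) :
    ∀ (n : ℕ) (v : V) (B₁ B₂ : ℕ), B₁ ≤ 2 * G.k + 1 → B₂ ≤ B₁ →
      muN G n v B₁ ≤ muN G n v B₂ := by
  intro n
  induction n with
  | zero => intro v B₁ B₂ _ _; simp [muN]
  | succ n ih =>
    intro v B₁ B₂ hB₁ hle
    rcases eq_or_lt_of_le hle with h | h
    · subst h; exact le_refl _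
    · simp only [muN]
      apply Finset.le_inf'
      intro b hb
      simp only [Finset.mem_range] at hb
      have hbB₂ : b ≤ B₂ := Nat.lt_succ_iff.mp hb
      set b' := b + (B₁ - B₂) with hb'
      have hb'B₁ : b' ≤ B₁ := by omega
      have hmem : b' ∈ Finset.range (B₁ + 1) := Finset.mem_range.mpr (by omega)
      refine le_trans (Finset.inf'_le _ hmem) ?_
      -- Ewin equality
      have hsub : B₁ - b' = B₂ - b := by omega
      have hwin : Ewin G (muN G n) v B₁ b' = Ewin G (muN G n) v B₂ b := by
        simp only [Ewin, hsub]
      -- trump bounds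
      have ht1 : b' ≤ trumpE B₁ b' := by unfold trumpE; split <;> omega
      have ht2 : trumpE B₂ b ≤ b + 1 := by unfold trumpE; split <;> omega
      have hX : B₂ + trumpE B₂ b ≤ B₁ + trumpE B₁ b' := by omega
      by_cases h1 : B₁ + trumpE B₁ b' ≤ 2 * G.k + 1
      · have h2 : B₂ + trumpE B₂ b ≤ 2 * G.k + 1 := le_trans hX h1
        have hlose : Elose G (muN G n) v B₁ b' ≤ Elose G (muN G n) v B₂ b := by
          apply Finset.sup'_mono_fun
          intro v' _
          have := ih v' (B₁ + trumpE B₁ b') (B₂ + trumpE B₂ b) h1 hX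
          have : ((muN G n v' (B₁ + trumpE B₁ b') : ℤ) - G.w v v')
              ≤ ((muN G n v' (B₂ + trumpE B₂ b) : ℤ) - G.w v v') := by
            omega
          exact Int.toNat_le_toNat this
        simp only [Enext, if_pos h1, if_pos h2, hwin]
        exact max_le_max le_rfl hlose
      · simp only [Enext, if_neg h1, hwin]
        split
        · exact le_max_left _ _
        · exact le_rfl
end

section
/- Suppose an infinite sequence of configurations c_0, c_1, ... with weights w_i ∈ [−W, W] satisfies: within each of at most k+1 patches, the invariant e(c_i) + w_i ≥ e(c_{i+1}) holds for a nonnegative function e bounded by E_max, while at most k transition edges occur between patches. Then an initial energy of M = (k+1)·(W + E_max) suffices to keep the accumulated energy nonnegative in every prefix: M + Σ_{t<m} w_t ≥ 0 for all m. -/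
/-- energy bookkeeping across patches. If the indices are
grouped by a monotone patch function `p` with at most `k+1` values, within
each patch the invariant `e(c_{i+1}) ≤ e(c_i) + w_i` holds for a potential
`e ≤ Emax`, and all weights satisfy `|w_i| ≤ W`, then the initial energy
`M = (k+1) · (W + Emax)` keeps every partial sum nonnegative. -/
theorem energy_bookkeeping {C : Type*} (k W Emax : ℕ)
    (c : ℕ → C) (w : ℕ → ℤ) (e : C → ℕ)
    (hE : ∀ x : C, e x ≤ Emax)
    (hw : ∀ i : ℕ, |w i| ≤ (W : ℤ))
    (p : ℕ → ℕ) (hp : Monotone p) (hpk : ∀ i, p i ≤ k)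
    (hstep : ∀ i : ℕ, p i = p (i + 1) →
      (e (c (i + 1)) : ℤ) ≤ (e (c i) : ℤ) + w i) :
    ∀ m : ℕ, 0 ≤ (((k + 1) * (W + Emax) : ℕ) : ℤ) +
      ∑ t ∈ Finset.range m, w t := by
  have key : ∀ m : ℕ,
      (e (c m) : ℤ) - (e (c 0) : ℤ) - ((p m : ℤ) - (p 0 : ℤ)) * ((W : ℤ) + Emax)
        ≤ ∑ t ∈ Finset.range m, w t := by
    intro m
    induction m with
    | zero => simp
    | succ n ih =>
      rw [Finset.sum_range_succ]
      by_cases h : p n = p (n + 1)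
      · have := hstep n h
        rw [← h]
        linarith
      · have h1 : p n ≤ p (n + 1) := hp (Nat.le_succ n)
        have h2 : (p n : ℤ) + 1 ≤ (p (n + 1) : ℤ) := by
          have : p n < p (n + 1) := lt_of_le_of_ne h1 h
          exact_mod_cast this
        have hwn : -(W : ℤ) ≤ w n := (abs_le.mp (hw n)).1
        have hEn : (e (c (n + 1)) : ℤ) ≤ Emax := by exact_mod_cast hE (c (n + 1))
        have hEn0 : (0 : ℤ) ≤ (e (c n) : ℤ) := Int.natCast_nonneg _
        nlinarith [Int.natCast_nonneg W, Int.natCast_nonneg Emax]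
  intro m
  have h1 := key m
  have h2 : (e (c 0) : ℤ) ≤ Emax := by exact_mod_cast hE (c 0)
  have h3 : (0 : ℤ) ≤ (e (c m) : ℤ) := Int.natCast_nonneg _
  have h4 : (p m : ℤ) - (p 0 : ℤ) ≤ k := by
    have := hpk m
    have := Int.natCast_nonneg (p 0)
    omega
  have h5 : (((k + 1) * (W + Emax) : ℕ) : ℤ) = ((k : ℤ) + 1) * ((W : ℤ) + Emax) := by
    push_cast; ring
  rw [h5]
  nlinarith [Int.natCast_nonneg W, Int.natCast_nonneg Emax, Int.natCast_nonneg (p 0), sub_nonneg.mpr ((Int.ofNat_le.mpr (hp (Nat.zero_le m))) : (p 0 : ℤ) ≤ p m)]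
end
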